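/- Let φ : [0,2] × ℝ → ℝ be continuous with φ_c(0) > 0 for all c ∈ [0,2], φ_2^n(0) < 0 for all n ≥ 2, and suppose r ≥ 2 is the smallest integer with Φ_r(ĉ) = 0 for some ĉ ∈ [0,2), where Φ_n(c) = φ_c^n(0). For each n ≥ r let c_n* be the largest solution of Φ_n(c) = 0 in [0,2). Then c_r* < c_{r+1}* < c_{r+2}* < ⋯ < 2, and for each n ≥ r the point 0 is a periodic point of φ_{c_n*} of least period exactly n. -/

import Mathlib

private lemma iter_contOn (φ : ℝ → ℝ → ℝ)
    (hcont : ContinuousOn (fun p : ℝ × ℝ => φ p.1 p.2) (Set.Icc 0 2 ×ˢ Set.univ))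
    (k : ℕ) : ContinuousOn (fun c => (φ c)^[k] 0) (Set.Icc (0:ℝ) 2) := by
  induction k with
  | zero => simpa using continuousOn_const
  | succ k ih =>
    have h : (fun c => (φ c)^[k+1] 0) = fun c => φ c ((φ c)^[k] 0) := by
      funext c; rw [Function.iterate_succ_apply']
    rw [h]
    exact hcont.comp (continuousOn_id.prodMk ih) (fun c hc => ⟨hc, trivial⟩)

theorem largest_solutions_increasing
    (φ : ℝ → ℝ → ℝ)
    (hcont : ContinuousOn (fun p : ℝ × ℝ => φ p.1 p.2) (Set.Icc 0 2 ×ˢ Set.univ))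
    (hpos : ∀ c ∈ Set.Icc (0:ℝ) 2, φ c 0 > 0)
    (hneg : ∀ n : ℕ, 2 ≤ n → (φ 2)^[n] 0 < 0)
    (r : ℕ) (hr : 2 ≤ r)
    (hex : ∃ c_hat ∈ Set.Ico (0:ℝ) 2, (φ c_hat)^[r] 0 = 0)
    (hmin : ∀ m : ℕ, 2 ≤ m → m < r → ∀ c ∈ Set.Ico (0:ℝ) 2, (φ c)^[m] 0 ≠ 0)
    (cstar : ℕ → ℝ)
    (hcstar : ∀ n : ℕ, r ≤ n →
      cstar n ∈ Set.Ico (0:ℝ) 2 ∧ (φ (cstar n))^[n] 0 = 0 ∧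
        ∀ c ∈ Set.Ico (0:ℝ) 2, (φ c)^[n] 0 = 0 → c ≤ cstar n) :
    ∀ n : ℕ, r ≤ n →
      cstar n < cstar (n + 1) ∧
      (φ (cstar n))^[n] 0 = 0 ∧
      ∀ m : ℕ, 1 ≤ m → m < n → (φ (cstar n))^[m] 0 ≠ 0 := by
  -- strict increase of consecutive cstar
  have hinc : ∀ n : ℕ, r ≤ n → cstar n < cstar (n + 1) := by
    intro n hn
    obtain ⟨hmem, hzero, _⟩ := hcstar n hn
    obtain ⟨_, _, hmax'⟩ := hcstar (n + 1) (le_trans hn (Nat.le_succ n))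
    have hmemIcc : cstar n ∈ Set.Icc (0:ℝ) 2 := ⟨hmem.1, le_of_lt hmem.2⟩
    -- Φ_{n+1} at cstar n is positive
    have hs : (φ (cstar n))^[n+1] 0 > 0 := by
      rw [Function.iterate_succ_apply', hzero]
      exact hpos _ hmemIcc
    have ht : (φ 2)^[n+1] 0 < 0 := hneg (n+1) (by omega)
    -- IVT on [cstar n, 2]
    have hco : ContinuousOn (fun c => (φ c)^[n+1] 0) (Set.Icc (cstar n) 2) :=
      (iter_contOn φ hcont (n+1)).mono (Set.Icc_subset_Icc hmem.1 le_rfl)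
    have hsub : Set.Icc ((φ 2)^[n+1] 0) ((φ (cstar n))^[n+1] 0) ⊆
        (fun c => (φ c)^[n+1] 0) '' Set.Icc (cstar n) 2 :=
      intermediate_value_Icc' (le_of_lt hmem.2) hco
    obtain ⟨c, hc, hceq⟩ := hsub ⟨le_of_lt ht, le_of_lt hs⟩
    have hc2 : c < 2 := by
      rcases lt_or_eq_of_le hc.2 with h | h
      · exact h
      · exfalso; rw [h] at hceq; simp only at hceq; rw [hceq] at ht; exact lt_irrefl 0 ht
    have hcne : cstar n < c := by
      rcases lt_or_eq_of_le hc.1 with h | h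
      · exact h
      · exfalso; rw [← h] at hceq; simp only at hceq; rw [hceq] at hs; exact lt_irrefl 0 hs
    have := hmax' c ⟨le_trans hmem.1 hc.1, hc2⟩ hceq
    linarith
  -- monotone chain
  have hchain : ∀ m n : ℕ, r ≤ m → m < n → cstar m < cstar n := by
    intro m n hm hmn
    induction n with
    | zero => omega
    | succ n ih =>
      rcases Nat.lt_or_ge m n with h | h
      · exact lt_trans (ih h) (hinc n (by omega))
      · have : m = n := by omega
        subst this; exact hinc m hm
  intro n hn
  obtain ⟨hmem, hzero, _⟩ := hcstar n hn
  refine ⟨hinc n hn, hzero, ?_⟩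
  intro m hm1 hmn hmz
  set c := cstar n with hc
  set p := Function.minimalPeriod (φ c) 0 with hp
  have hper_m : Function.IsPeriodicPt (φ c) m 0 := hmz
  have hper_n : Function.IsPeriodicPt (φ c) n 0 := hzero
  have hppos : 0 < p := hper_m.minimalPeriod_pos (by omega)
  have hpdm : p ∣ m := hper_m.minimalPeriod_dvd
  have hpdn : p ∣ n := hper_n.minimalPeriod_dvd
  have hplem : p ≤ m := Nat.le_of_dvd (by omega) hpdm
  have hpz : (φ c)^[p] 0 = 0 := Function.iterate_minimalPeriod
  have hmemIcc : c ∈ Set.Icc (0:ℝ) 2 := ⟨hmem.1, le_of_lt hmem.2⟩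
  rcases Nat.lt_or_ge p 2 with h2 | h2
  · -- p = 1
    have : p = 1 := by omega
    rw [this] at hpz
    simp at hpz
    have := hpos c hmemIcc
    linarith
  rcases Nat.lt_or_ge p r with hpr | hpr
  · exact hmin p h2 hpr c hmem hpz
  · -- p ≥ r, p < n, p zero at c, so c ≤ cstar p < cstar n = c
    have hpltn : p < n := by omega
    obtain ⟨_, _, hmaxp⟩ := hcstar p hpr
    have h1 : c ≤ cstar p := hmaxp c hmem hpz
    have h2' : cstar p < cstar n := hchain p n hpr hpltn
    rw [← hc] at h2'
    linarith
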